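/- Let ψ ∈ S(m_ψ, L_ψ) with minimizer y_opt, let 𝓖 satisfy the connectivity assumption with a single informed agent 𝓥_l = {i}, and let r ∈ ℝ^{Nd} be arbitrary. Then z minimizes f(y) = ½(y−r)ᵀ(𝓛⊗I_d)(y−r) + ψ(y_i) if and only if z_j = y_opt + (r_j − r_i) for every vertex j. -/

import Mathlib

open Matrix
open scoped Kronecker

def memS {E : Type*} [NormedAddCommGroup E] [InnerProductSpace ℝ E] [CompleteSpace E]
    (m L : ℝ) (f : E → ℝ) : Prop :=
  ContDiff ℝ 1 f ∧
    ∀ y₁ y₂ : E,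
      m * ‖y₁ - y₂‖ ^ 2 ≤ (inner ℝ (gradient f y₁ - gradient f y₂) (y₁ - y₂) : ℝ) ∧
      (inner ℝ (gradient f y₁ - gradient f y₂) (y₁ - y₂) : ℝ) ≤ L * ‖y₁ - y₂‖ ^ 2

noncomputable def bigf {N d : ℕ} (𝓛 : Matrix (Fin N) (Fin N) ℝ)
    (r : EuclideanSpace ℝ (Fin N × Fin d)) (Vl : Finset (Fin N))
    (ψ : EuclideanSpace ℝ (Fin d) → ℝ) (y : EuclideanSpace ℝ (Fin N × Fin d)) : ℝ :=
  (1 / 2) * ((fun p => y p - r p) ⬝ᵥ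
      (𝓛 ⊗ₖ (1 : Matrix (Fin d) (Fin d) ℝ)).mulVec (fun p => y p - r p))
    + ∑ i ∈ Vl, ψ (WithLp.toLp 2 (fun j => y (i, j)))

/-- Strong-convexity lower bound: a critical point of a function with `m`-strongly
monotone gradient is a global minimizer, quantitatively. -/
lemma memS_lower {E : Type*} [NormedAddCommGroup E] [InnerProductSpace ℝ E] [CompleteSpace E]
    (m : ℝ) (f : E → ℝ)
    (hdiff : Differentiable ℝ f)
    (hmono : ∀ y₁ y₂ : E, m * ‖y₁ - y₂‖ ^ 2 ≤ (inner ℝ (gradient f y₁ - gradient f y₂) (y₁ - y₂) : ℝ))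
    (y₀ : E) (h0 : gradient f y₀ = 0) (y : E) :
    f y₀ + m / 2 * ‖y - y₀‖ ^ 2 ≤ f y := by
  set v := y - y₀ with hv
  set g : ℝ → ℝ := fun t => f (y₀ + t • v) - m / 2 * t ^ 2 * ‖v‖ ^ 2 with hg
  have hc : ∀ t : ℝ, HasDerivAt (fun t : ℝ => y₀ + t • v) v t := by
    intro t
    simpa using ((hasDerivAt_id t).smul_const v).const_add y₀
  have key : ∀ t : ℝ, HasDerivAt g
      ((inner ℝ (gradient f (y₀ + t • v)) v : ℝ) - m * t * ‖v‖ ^ 2) t := by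
    intro t
    have h1 : HasDerivAt (fun t : ℝ => f (y₀ + t • v))
        (inner ℝ (gradient f (y₀ + t • v)) v : ℝ) t := by
      have := ((hdiff (y₀ + t • v)).hasGradientAt.hasFDerivAt).comp_hasDerivAt t (hc t)
      have e : (inner ℝ (gradient f (y₀ + t • v)) v : ℝ)
          = InnerProductSpace.toDual ℝ E (gradient f (y₀ + t • v)) v := by
        simp
      rw [e]; exact this
    have h2 : HasDerivAt (fun t : ℝ => m / 2 * t ^ 2 * ‖v‖ ^ 2) (m * t * ‖v‖ ^ 2) t := by
      have := ((hasDerivAt_pow 2 t).const_mul (m / 2)).mul_const (‖v‖ ^ 2)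
      convert this using 1
      · rfl
      · rfl
      · ring
    exact h1.sub h2
  have hmonot : MonotoneOn g (Set.Icc (0:ℝ) 1) := by
    apply monotoneOn_of_deriv_nonneg (convex_Icc 0 1)
    · exact fun t _ => ((key t).continuousAt).continuousWithinAt
    · exact fun t _ => ((key t).differentiableAt).differentiableWithinAt
    · intro t ht
      rw [interior_Icc] at ht
      rw [(key t).deriv]
      have hineq := hmono (y₀ + t • v) y₀
      rw [h0, sub_zero, add_sub_cancel_left] at hineq
      rw [norm_smul, real_inner_smul_right] at hineq
      have ht0 : 0 < t := ht.1
      have htn : ‖t‖ = t := by rw [Real.norm_eq_abs, abs_of_pos ht0]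
      rw [htn] at hineq
      nlinarith
  have h01 := hmonot (Set.mem_Icc.2 ⟨le_refl 0, zero_le_one⟩)
    (Set.mem_Icc.2 ⟨zero_le_one, le_refl 1⟩) zero_le_one
  simp only [hg, zero_smul, add_zero, one_smul, one_pow] at h01
  have hyv : y₀ + v = y := by rw [hv]; abel
  rw [hyv] at h01
  linarith

/-- Splitting the Kronecker quadratic form into `d` Laplacian quadratic forms. -/
noncomputable def colv {N d : ℕ} (y : EuclideanSpace ℝ (Fin N × Fin d)) (i : Fin N) :
    EuclideanSpace ℝ (Fin d) :=
  WithLp.toLp 2 (fun j => y (i, j))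

lemma kron_quad {N d : ℕ} (A : Matrix (Fin N) (Fin N) ℝ) (w : Fin N × Fin d → ℝ) :
    w ⬝ᵥ (A ⊗ₖ (1 : Matrix (Fin d) (Fin d) ℝ)).mulVec w
      = ∑ p : Fin d, (fun i => w (i, p)) ⬝ᵥ A.mulVec (fun i => w (i, p)) := by
  simp only [dotProduct, mulVec, kroneckerMap_apply, Matrix.one_apply,
    Fintype.sum_prod_type, mul_ite, mul_one, mul_zero, ite_mul, zero_mul,
    Finset.sum_ite_eq, Finset.sum_ite_eq', Finset.mem_univ, if_true]
  rw [Finset.sum_comm]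

lemma lap_quad_nonneg {N : ℕ} (G : SimpleGraph (Fin N)) [DecidableRel G.Adj]
    (x : Fin N → ℝ) : 0 ≤ x ⬝ᵥ (G.lapMatrix ℝ).mulVec x := by
  have := (SimpleGraph.posSemidef_lapMatrix ℝ G).dotProduct_mulVec_nonneg x
  simpa using this

lemma lap_quad_const {N : ℕ} (G : SimpleGraph (Fin N)) [DecidableRel G.Adj]
    (x : Fin N → ℝ) (i₀ : Fin N) (h : ∀ i, x i = x i₀) :
    x ⬝ᵥ (G.lapMatrix ℝ).mulVec x = 0 := by
  have hx : x = (x i₀) • (fun _ : Fin N => (1:ℝ)) := funext fun i => by simp [h i]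
  rw [hx, Matrix.mulVec_smul, SimpleGraph.lapMatrix_mulVec_const_eq_zero, smul_zero,
    dotProduct_zero]

lemma lap_quad_eq_zero {N : ℕ} (G : SimpleGraph (Fin N)) [DecidableRel G.Adj]
    (x : Fin N → ℝ) (hx : x ⬝ᵥ (G.lapMatrix ℝ).mulVec x = 0) :
    ∀ i j, G.Reachable i j → x i = x j := by
  rw [← Matrix.toLinearMap₂'_apply'] at hx
  exact (G.lapMatrix_toLinearMap₂'_apply'_eq_zero_iff_forall_reachable x).1 hx

/-- with a single informed agent `𝓥_l = {i₀}` and arbitrary formation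
reference `r`, `z` minimizes `f` iff `z_j = y_opt + (r_j − r_{i₀})` for all `j`. -/
theorem stmt7 {N d : ℕ} [NeZero N] [NeZero d]
    (G : SimpleGraph (Fin N)) [DecidableRel G.Adj] (i₀ : Fin N)
    (hconn : ∀ v : Fin N, G.Reachable v i₀)
    (mψ Lψ : ℝ) (hmψ : 0 < mψ) (hmLψ : mψ ≤ Lψ)
    (ψ : EuclideanSpace ℝ (Fin d) → ℝ) (hψ : memS mψ Lψ ψ)
    (yopt : EuclideanSpace ℝ (Fin d)) (hyopt : gradient ψ yopt = 0)
    (r : EuclideanSpace ℝ (Fin N × Fin d))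
    (z : EuclideanSpace ℝ (Fin N × Fin d)) :
    (∀ y, bigf (G.lapMatrix ℝ) r {i₀} ψ z ≤ bigf (G.lapMatrix ℝ) r {i₀} ψ y) ↔
      ∀ (j : Fin N) (p : Fin d), z (j, p) = yopt p + (r (j, p) - r (i₀, p)) := by
  have hdiff : Differentiable ℝ ψ := hψ.1.differentiable one_ne_zero
  have hmono := fun a b => (hψ.2 a b).1
  -- the quadratic form is nonneg
  have hQnn : ∀ y : EuclideanSpace ℝ (Fin N × Fin d),
      0 ≤ (fun p => y p - r p) ⬝ᵥ
        ((G.lapMatrix ℝ) ⊗ₖ (1 : Matrix (Fin d) (Fin d) ℝ)).mulVec (fun p => y p - r p) := by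
    intro y
    rw [kron_quad]
    exact Finset.sum_nonneg fun p _ => lap_quad_nonneg G _
  -- f is bounded below by ψ yopt, quantitatively
  have hlow : ∀ y : EuclideanSpace ℝ (Fin N × Fin d),
      ψ yopt + mψ / 2 * ‖colv y i₀ - yopt‖ ^ 2
        ≤ bigf (G.lapMatrix ℝ) r {i₀} ψ y := by
    intro y
    have h1 := hQnn y
    have h2 := memS_lower mψ ψ hdiff hmono yopt hyopt (colv y i₀)
    simp only [bigf, Finset.sum_singleton]
    have hcy : ψ (colv y i₀) = ψ (WithLp.toLp 2 fun j => y (i₀, j)) := rfl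
    rw [hcy] at h2
    linarith
  -- any configuration of the stated form attains value ψ yopt
  have hval : ∀ y : EuclideanSpace ℝ (Fin N × Fin d),
      (∀ (j : Fin N) (p : Fin d), y (j, p) = yopt p + (r (j, p) - r (i₀, p))) →
      bigf (G.lapMatrix ℝ) r {i₀} ψ y = ψ yopt := by
    intro y hy
    have hQ : (fun p => y p - r p) ⬝ᵥ
        ((G.lapMatrix ℝ) ⊗ₖ (1 : Matrix (Fin d) (Fin d) ℝ)).mulVec (fun p => y p - r p) = 0 := by
      rw [kron_quad]
      refine Finset.sum_eq_zero fun p _ => ?_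
      refine lap_quad_const G _ i₀ fun i => ?_
      have h1 := hy i p
      have h2 := hy i₀ p
      simp only []
      linarith
    have hψval : (WithLp.toLp 2 fun j => y (i₀, j)) = yopt := by
      ext j
      have := hy i₀ j; simpa using this
    simp [bigf, hQ, hψval]
  constructor
  · intro hmin
    -- the candidate minimizer
    set ystar : EuclideanSpace ℝ (Fin N × Fin d) :=
      WithLp.toLp 2 (fun p => yopt p.2 + (r p - r (i₀, p.2))) with hystar
    have hystarprop : ∀ (j : Fin N) (p : Fin d), ystar (j, p) = yopt p + (r (j, p) - r (i₀, p)) := by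
      intro j p; rfl
    have h1 : bigf (G.lapMatrix ℝ) r {i₀} ψ z ≤ ψ yopt := by
      have := hmin ystar
      rwa [hval ystar hystarprop] at this
    have h2 := hlow z
    have hQz := hQnn z
    have hsnn : (0:ℝ) ≤ ‖colv z i₀ - yopt‖ ^ 2 := by positivity
    -- hence the norm² term is zero and the quadratic is zero
    have hs0 : ‖colv z i₀ - yopt‖ ^ 2 = 0 := by nlinarith
    have hzi : colv z i₀ = yopt := by
      have : ‖colv z i₀ - yopt‖ = 0 := by
        have := sq_eq_zero_iff.1 hs0; exact this
      have := norm_eq_zero.1 this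
      exact sub_eq_zero.1 this
    have hzi' : ∀ p : Fin d, z (i₀, p) = yopt p := fun p => by rw [← hzi]; rfl
    -- quadratic part of z is zero
    have hψz : (ψ (WithLp.toLp 2 fun j => z (i₀, j))) = ψ yopt := by
      have hcz : (WithLp.toLp 2 fun j => z (i₀, j)) = colv z i₀ := rfl
      rw [hcz, hzi]
    have hQ0 : (fun p => z p - r p) ⬝ᵥ
        ((G.lapMatrix ℝ) ⊗ₖ (1 : Matrix (Fin d) (Fin d) ℝ)).mulVec (fun p => z p - r p) = 0 := by
      simp only [bigf, Finset.sum_singleton] at h1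
      rw [hψz] at h1
      linarith
    -- each coordinate quadratic form is zero
    have hterm : ∀ p : Fin d,
        (fun i => z (i, p) - r (i, p)) ⬝ᵥ (G.lapMatrix ℝ).mulVec
          (fun i => z (i, p) - r (i, p)) = 0 := by
      rw [kron_quad] at hQ0
      intro p
      have := (Finset.sum_eq_zero_iff_of_nonneg
        (fun q _ => lap_quad_nonneg G (fun i => z (i, q) - r (i, q)))).1 hQ0 p (Finset.mem_univ p)
      exact this
    intro j p
    have hreach := lap_quad_eq_zero G _ (hterm p) j i₀ (hconn j)
    simp only [] at hreach
    have := hzi' p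
    linarith
  · intro hz y
    have h := hlow y
    have hnn : 0 ≤ mψ / 2 * ‖colv y i₀ - yopt‖ ^ 2 := by positivity
    rw [hval z hz]
    linarith
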